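/- The constant $4/n$ for the same-child-routing sensitivity of the Gini split gain is asymptotically tight: with binary labels, $n_L = m$ left samples all of class 1 and $n - m$ right samples all of class 0, flipping one left sample to class 0 changes the split gain by exactly $\Delta(m,n) = \frac{2(n-m)(2m-1)}{n^2 m}$, and with $m = \lfloor\sqrt{n/2}\rfloor$ one has $n\,\Delta(m,n) \to 4$ as $n \to \infty$. Hence for every $\gamma > 0$ there exist $n$ and a configuration with $|F(S) - F(S^{(i)})| > 4/n - \gamma$. -/

import Mathlib

open Filter

/-- Exact split-gain change when one class-1 sample in a pure-class-1 left
child of size `m` (out of `n`, right child pure class 0) is flipped to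
class 0, routing unchanged. -/
noncomputable def giniFlipDelta (m n : ℕ) : ℝ :=
  2 * ((n : ℝ) - m) * (2 * (m : ℝ) - 1) / ((n : ℝ) ^ 2 * m)

private lemma sqrtAtTop' : Tendsto Real.sqrt atTop atTop := by
  rw [show Real.sqrt = fun x : ℝ => x ^ (1/2 : ℝ) from funext fun x => Real.sqrt_eq_rpow x]
  exact tendsto_rpow_atTop (by norm_num)

private lemma floorsq_atTop' :
    Tendsto (fun n : ℕ => (⌊Real.sqrt ((n : ℝ) / 2)⌋₊ : ℝ)) atTop atTop := by
  apply tendsto_natCast_atTop_atTop.comp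
  apply tendsto_nat_floor_atTop.comp
  exact sqrtAtTop'.comp (tendsto_natCast_atTop_atTop.atTop_div_const two_pos)

private lemma ratio_tendsto' :
    Tendsto (fun n : ℕ => (⌊Real.sqrt ((n : ℝ) / 2)⌋₊ : ℝ) / n) atTop (nhds 0) := by
  have hg : Tendsto (fun n : ℕ => 1 / Real.sqrt n) atTop (nhds 0) := by
    simpa [one_div, Pi.inv_def, Function.comp_def] using
      (sqrtAtTop'.comp (tendsto_natCast_atTop_atTop (R := ℝ))).inv_tendsto_atTop
  apply squeeze_zero' (g := fun n : ℕ => 1 / Real.sqrt n) ?_ ?_ hg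
  · filter_upwards with n; positivity
  · filter_upwards [eventually_ge_atTop 1] with n hn
    have hn' : (0:ℝ) < n := by exact_mod_cast hn
    have h1 : (⌊Real.sqrt ((n : ℝ) / 2)⌋₊ : ℝ) ≤ Real.sqrt n := by
      calc (⌊Real.sqrt ((n : ℝ) / 2)⌋₊ : ℝ) ≤ Real.sqrt ((n : ℝ) / 2) :=
            Nat.floor_le (Real.sqrt_nonneg _)
        _ ≤ Real.sqrt n := Real.sqrt_le_sqrt (by linarith)
    have h2 : Real.sqrt n / n = 1 / Real.sqrt n := by
      rw [div_eq_div_iff hn'.ne' (Real.sqrt_pos.mpr hn').ne', one_mul,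
        Real.mul_self_sqrt hn'.le]
    calc (⌊Real.sqrt ((n : ℝ) / 2)⌋₊ : ℝ) / n ≤ Real.sqrt n / n := by gcongr
      _ = 1 / Real.sqrt n := h2

/-- Asymptotic tightness of the `4/n` same-child-routing
sensitivity of the Gini split gain.  (i) In the configuration with `m` left
samples all of class 1 and `n - m` right samples all of class 0, flipping one
left sample to class 0 changes the gain by exactly
`Δ(m,n) = 2(n-m)(2m-1)/(n² m)`; (ii) with `m = ⌊√(n/2)⌋`,
`n·Δ(m,n) → 4` as `n → ∞`; (iii) hence for every `γ > 0` there is a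
configuration with gain change `> 4/n - γ`. -/
theorem gini_gain_sensitivity_tight :
    (∀ n m : ℕ, 1 ≤ m → m ≤ n →
      |(2 * ((m : ℝ) / n) * (1 - (m : ℝ) / n))
          - ((2 * (((m : ℝ) - 1) / n) * (1 - ((m : ℝ) - 1) / n))
              - ((m : ℝ) / n) * (2 * (((m : ℝ) - 1) / m) * (1 / (m : ℝ))))|
        = giniFlipDelta m n) ∧
    Tendsto (fun n : ℕ => (n : ℝ) * giniFlipDelta (⌊Real.sqrt (n / 2)⌋₊) n)
      atTop (nhds 4) ∧
    (∀ γ : ℝ, 0 < γ → ∃ n m : ℕ, 1 ≤ m ∧ m ≤ n ∧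
      giniFlipDelta m n > 4 / n - γ) := by
  refine ⟨?_, ?_, ?_⟩
  · -- (i)
    intro n m hm hmn
    have hm' : (1:ℝ) ≤ (m:ℝ) := by exact_mod_cast hm
    have hmn' : (m:ℝ) ≤ (n:ℝ) := by exact_mod_cast hmn
    have hmpos : (0:ℝ) < m := by linarith
    have hnpos : (0:ℝ) < n := by linarith
    have hX : (2 * ((m : ℝ) / n) * (1 - (m : ℝ) / n))
          - ((2 * (((m : ℝ) - 1) / n) * (1 - ((m : ℝ) - 1) / n))
              - ((m : ℝ) / n) * (2 * (((m : ℝ) - 1) / m) * (1 / (m : ℝ))))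
        = giniFlipDelta m n := by
      unfold giniFlipDelta
      field_simp
      ring
    rw [hX, abs_of_nonneg]
    apply div_nonneg
    · have h1 : (0:ℝ) ≤ (n:ℝ) - m := by linarith
      have h2 : (0:ℝ) ≤ 2 * (m:ℝ) - 1 := by linarith
      positivity
    · positivity
  · -- (ii)
    have hinv : Tendsto (fun n : ℕ => 1 / (⌊Real.sqrt ((n : ℝ) / 2)⌋₊ : ℝ)) atTop (nhds 0) := by
      simpa [one_div, Pi.inv_def] using floorsq_atTop'.inv_tendsto_atTop
    have hmul : Tendsto
        (fun n : ℕ => (2 - 2 * ((⌊Real.sqrt ((n : ℝ) / 2)⌋₊ : ℝ) / n))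
          * (2 - 1 / (⌊Real.sqrt ((n : ℝ) / 2)⌋₊ : ℝ))) atTop (nhds 4) := by
      have h1 : Tendsto (fun n : ℕ => 2 - 2 * ((⌊Real.sqrt ((n : ℝ) / 2)⌋₊ : ℝ) / n))
          atTop (nhds 2) := by
        have := (tendsto_const_nhds (x := (2:ℝ)) (f := atTop (α := ℕ))).sub
          (ratio_tendsto'.const_mul 2)
        simpa using this
      have h2 : Tendsto (fun n : ℕ => 2 - 1 / (⌊Real.sqrt ((n : ℝ) / 2)⌋₊ : ℝ))
          atTop (nhds 2) := by
        have := (tendsto_const_nhds (x := (2:ℝ)) (f := atTop (α := ℕ))).sub hinv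
        simpa using this
      have h4 : (4:ℝ) = 2 * 2 := by norm_num
      rw [h4]
      exact h1.mul h2
    apply hmul.congr'
    filter_upwards [eventually_ge_atTop 2] with n hn
    set m := ⌊Real.sqrt ((n : ℝ) / 2)⌋₊ with hmdef
    have hn' : (2:ℝ) ≤ (n:ℝ) := by exact_mod_cast hn
    have hm1 : 1 ≤ m := by
      rw [hmdef]
      have : (1:ℝ) ≤ Real.sqrt ((n : ℝ) / 2) := by
        rw [show (1:ℝ) = Real.sqrt 1 from (Real.sqrt_one).symm]
        exact Real.sqrt_le_sqrt (by linarith)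
      exact Nat.le_floor (by exact_mod_cast this)
    have hmpos : (0:ℝ) < (m:ℝ) := by exact_mod_cast hm1
    have hnpos : (0:ℝ) < (n:ℝ) := by linarith
    unfold giniFlipDelta
    field_simp
  · -- (iii)
    intro γ hγ
    refine ⟨⌈4/γ⌉₊ + 1, ⌈4/γ⌉₊ + 1, Nat.le_add_left 1 _, le_refl _, ?_⟩
    have hn : (4/γ : ℝ) < ((⌈4/γ⌉₊ + 1 : ℕ) : ℝ) := by
      push_cast
      have := Nat.le_ceil (4/γ)
      linarith
    have hnpos : (0:ℝ) < ((⌈4/γ⌉₊ + 1 : ℕ) : ℝ) := by positivity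
    have h4 : (4:ℝ) / ((⌈4/γ⌉₊ + 1 : ℕ) : ℝ) < γ := by
      rw [div_lt_iff₀ hnpos]
      calc (4:ℝ) = γ * (4/γ) := by field_simp
        _ < γ * _ := by exact mul_lt_mul_of_pos_left hn hγ
    have hΔ : giniFlipDelta (⌈4/γ⌉₊ + 1) (⌈4/γ⌉₊ + 1) = 0 := by
      unfold giniFlipDelta
      rw [sub_self, mul_zero, zero_mul, zero_div]
    rw [hΔ]
    linarith
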